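/- For all integers n, m, t with n ≥ m ≥ t ≥ 1, the minimum size of a covering design satisfies the inductive inequality C(n,m,t) ≥ ⌈(n/m) · C(n−1,m−1,t−1)⌉, where C(n,m,0) is defined to equal 1. -/

import Mathlib

/-- An `(n,m,t)`-covering design of size `k`. -/
def IsCoveringDesign (n m t k : ℕ) (S : Fin k → Finset (Fin n)) : Prop :=
  (∀ i, (S i).card = m) ∧ ∀ T : Finset (Fin n), T.card ≤ t → ∃ i, T ⊆ S i

/-- `C(n,m,t)`: the minimum size of an `(n,m,t)`-covering design.
(For `t = 0` and `m ≤ n` this equals `1`.) -/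
noncomputable def coveringNumber (n m t : ℕ) : ℕ :=
  sInf {k : ℕ | ∃ S : Fin k → Finset (Fin n), IsCoveringDesign n m t k S}

/-- The inductive inequality `C(n,m,t) ≥ ⌈(n/m) · C(n−1,m−1,t−1)⌉`. -/
theorem coveringNumber_inductive_lower_bound (n m t : ℕ)
    (ht : 1 ≤ t) (htm : t ≤ m) (hmn : m ≤ n) :
    ⌈(n : ℝ) / (m : ℝ) * (coveringNumber (n - 1) (m - 1) (t - 1) : ℝ)⌉ ≤
      (coveringNumber n m t : ℤ) := by
  obtain ⟨N, rfl⟩ : ∃ N, n = N + 1 := ⟨n - 1, by omega⟩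
  obtain ⟨M, rfl⟩ : ∃ M, m = M + 1 := ⟨m - 1, by omega⟩
  obtain ⟨T0, rfl⟩ : ∃ T0, t = T0 + 1 := ⟨t - 1, by omega⟩
  simp only [Nat.add_sub_cancel]
  set c := coveringNumber N M T0 with hc
  -- the defining set is nonempty
  have hne : {k : ℕ | ∃ S : Fin k → Finset (Fin (N+1)),
      IsCoveringDesign (N+1) (M+1) (T0+1) k S}.Nonempty := by
    classical
    set P : Finset (Finset (Fin (N+1))) := Finset.univ.powersetCard (M+1) with hP
    refine ⟨P.card, fun j => (P.equivFin.symm j : Finset (Fin (N+1))), ?_, ?_⟩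
    · intro i
      show (↑(P.equivFin.symm i) : Finset (Fin (N+1))).card = M + 1
      exact Finset.mem_powersetCard_univ.mp (P.equivFin.symm i).2
    · intro T hT
      obtain ⟨u, hu, hucard⟩ := Finset.exists_superset_card_eq
        (n := M+1) (s := T) (by omega) (by simpa using hmn)
      have humem : u ∈ P := by rw [hP, Finset.mem_powersetCard_univ]; exact hucard
      exact ⟨P.equivFin ⟨u, humem⟩, by simpa using hu⟩
  have hmemk : coveringNumber (N+1) (M+1) (T0+1) ∈ {k : ℕ | ∃ S : Fin k → Finset (Fin (N+1)),
      IsCoveringDesign (N+1) (M+1) (T0+1) k S} := Nat.sInf_mem hne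
  set k := coveringNumber (N+1) (M+1) (T0+1) with hk
  obtain ⟨S, hScard, hScov⟩ := hmemk
  classical
  -- per-point bound
  have hx : ∀ x : Fin (N+1), c ≤ (Finset.univ.filter (fun i : Fin k => x ∈ S i)).card := by
    intro x
    set Ix := Finset.univ.filter (fun i : Fin k => x ∈ S i) with hIx
    set e := finSuccEquiv' x with he
    apply Nat.sInf_le
    refine ⟨fun j => Finset.eraseNone ((S ((Ix.equivFin.symm j : {a // a ∈ Ix}) : Fin k)).map
      e.toEmbedding), ?_, ?_⟩
    · intro j
      set i : Fin k := ((Ix.equivFin.symm j : {a // a ∈ Ix}) : Fin k) with hi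
      have hxi : x ∈ S i := by
        have := (Ix.equivFin.symm j).2
        exact (Finset.mem_filter.mp this).2
      have hnone : none ∈ (S i).map e.toEmbedding := by
        rw [Finset.mem_map]
        exact ⟨x, hxi, by simp [he]⟩
      have : Finset.eraseNone ((S i).map e.toEmbedding)
          = (Finset.eraseNone ((S i).map e.toEmbedding)) := rfl
      have hcard : (Finset.eraseNone ((S i).map e.toEmbedding)).card
          = ((S i).map e.toEmbedding).card - 1 := by
        have := congrArg Finset.card (Finset.map_some_eraseNone ((S i).map e.toEmbedding))
        rw [Finset.card_map, Finset.card_erase_of_mem hnone] at this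
        exact this
      rw [hcard, Finset.card_map, hScard i]; omega
    · intro T' hT'
      set Tf : Finset (Fin (N+1)) := insert x (T'.image (fun z => e.symm (some z))) with hTf
      have hTfcard : Tf.card ≤ T0 + 1 := by
        calc Tf.card ≤ (T'.image (fun z => e.symm (some z))).card + 1 :=
              Finset.card_insert_le _ _
          _ ≤ T'.card + 1 := by
              exact Nat.add_le_add_right (Finset.card_image_le) 1
          _ ≤ T0 + 1 := by omega
      obtain ⟨i, hi⟩ := hScov Tf hTfcard
      have hxi : x ∈ S i := hi (Finset.mem_insert_self _ _)
      have himem : i ∈ Ix := by rw [hIx]; simp [hxi]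
      refine ⟨Ix.equivFin ⟨i, himem⟩, ?_⟩
      intro z hz
      simp only [Equiv.symm_apply_apply]
      rw [Finset.mem_eraseNone, Finset.mem_map]
      refine ⟨e.symm (some z), ?_, by simp [he]⟩
      exact hi (Finset.mem_insert_of_mem (Finset.mem_image_of_mem _ hz))
  -- double counting
  have key : (N + 1) * c ≤ k * (M + 1) := by
    calc (N + 1) * c = ∑ _x : Fin (N+1), c := by simp [mul_comm]
      _ ≤ ∑ x : Fin (N+1), (Finset.univ.filter (fun i : Fin k => x ∈ S i)).card :=
          Finset.sum_le_sum (fun x _ => hx x)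
      _ = ∑ x : Fin (N+1), ∑ i : Fin k, if x ∈ S i then 1 else 0 := by
          simp only [Finset.card_filter]
      _ = ∑ i : Fin k, ∑ x : Fin (N+1), if x ∈ S i then 1 else 0 := Finset.sum_comm
      _ = ∑ i : Fin k, (S i).card := by
          refine Finset.sum_congr rfl fun i _ => ?_
          rw [Finset.sum_ite_mem, Finset.univ_inter, Finset.card_eq_sum_ones]
      _ = k * (M + 1) := by simp [hScard, mul_comm]
  rw [Int.ceil_le]
  push_cast
  rw [div_mul_eq_mul_div, div_le_iff₀ (by positivity)]
  have : ((N:ℝ) + 1) * c ≤ k * ((M:ℝ) + 1) := by exact_mod_cast key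
  linarith
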